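/- Let p ≤ q ≤ r be integers with p ≥ 1. Then the determinant of the Gram matrix G(p,q,r) equals 1 or −1 (equivalently, pq + pr + qr − pqr = ±1, i.e., the lattice E_{p,q,r} is unimodular) if and only if (p,q,r) = (2,3,5) or (p,q,r) = (2,3,7). -/

import Mathlib

/-- The vertex type of the tree `T_{p,q,r}`: a central vertex together with three chains
having `p-1`, `q-1` and `r-1` further vertices respectively (so `T_{p,q,r}` has
`p + q + r - 2` vertices when `p, q, r ≥ 1`). -/
abbrev TVertex (p q r : ℕ) : Type := Unit ⊕ (Fin (p - 1) ⊕ (Fin (q - 1) ⊕ Fin (r - 1)))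

/-- Adjacency in the tree `T_{p,q,r}`: the central vertex is adjacent to the first vertex of
each chain, and consecutive vertices of a chain are adjacent. -/
def TAdj {p q r : ℕ} : TVertex p q r → TVertex p q r → Bool
  | Sum.inl _, Sum.inr (Sum.inl i) => i.val == 0
  | Sum.inl _, Sum.inr (Sum.inr (Sum.inl i)) => i.val == 0
  | Sum.inl _, Sum.inr (Sum.inr (Sum.inr i)) => i.val == 0
  | Sum.inr (Sum.inl i), Sum.inl _ => i.val == 0
  | Sum.inr (Sum.inr (Sum.inl i)), Sum.inl _ => i.val == 0
  | Sum.inr (Sum.inr (Sum.inr i)), Sum.inl _ => i.val == 0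
  | Sum.inr (Sum.inl i), Sum.inr (Sum.inl j) => (i.val + 1 == j.val) || (j.val + 1 == i.val)
  | Sum.inr (Sum.inr (Sum.inl i)), Sum.inr (Sum.inr (Sum.inl j)) =>
      (i.val + 1 == j.val) || (j.val + 1 == i.val)
  | Sum.inr (Sum.inr (Sum.inr i)), Sum.inr (Sum.inr (Sum.inr j)) =>
      (i.val + 1 == j.val) || (j.val + 1 == i.val)
  | _, _ => false

/-- The Gram matrix `G(p,q,r)` of the tree `T_{p,q,r}`: diagonal entries `2`, entries `-1`
between adjacent vertices, and `0` otherwise. -/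
def gramT (p q r : ℕ) : Matrix (TVertex p q r) (TVertex p q r) ℤ :=
  Matrix.of fun v w => if v = w then 2 else if TAdj v w then -1 else 0


noncomputable def nent (k a b : ℕ) : ℚ :=
  ((min a b : ℕ) + 1) * ((k : ℚ) - ((max a b : ℕ) : ℚ)) / (k + 1)

lemma key (k a b : ℕ) (ha : a < k) (hb : b < k) :
    2 * nent k a b + (if a + 1 < k then -(nent k (a + 1) b) else 0)
      + (if 0 < a then -(nent k (a - 1) b) else 0) = if a = b then 1 else 0 := by
  have hk : (k : ℚ) + 1 ≠ 0 := by positivity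
  rcases lt_trichotomy a b with h | rfl | h
  · -- a < b : note a + 1 < k automatically
    rw [if_neg (by omega : ¬ a = b), if_pos (by omega : a + 1 < k)]
    obtain ⟨e1, e2, e3, e4, e5, e6⟩ :
        min a b = a ∧ max a b = b ∧ min (a + 1) b = a + 1 ∧ max (a + 1) b = b ∧
          min (a - 1) b = a - 1 ∧ max (a - 1) b = b := by omega
    unfold nent
    rw [e1, e2, e3, e4, e5, e6]
    rcases Nat.eq_zero_or_pos a with h0 | h0
    · subst h0
      rw [if_neg (by omega : ¬ (0:ℕ) < 0)]
      push_cast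
      field_simp
      ring
    · rw [if_pos h0, Nat.cast_sub (by omega : 1 ≤ a)]
      push_cast
      field_simp
      ring
  · -- a = b
    rw [if_pos rfl]
    obtain ⟨e1, e2, e3, e4, e5, e6⟩ :
        min a a = a ∧ max a a = a ∧ min (a + 1) a = a ∧ max (a + 1) a = a + 1 ∧
          min (a - 1) a = a - 1 ∧ max (a - 1) a = a := by omega
    unfold nent
    rw [e1, e2, e3, e4, e5, e6]
    rcases Nat.eq_zero_or_pos a with h0 | h0
    · subst h0
      rw [if_neg (by omega : ¬ (0:ℕ) < 0)]
      rcases eq_or_lt_of_le (by omega : 1 ≤ k) with hk1 | hk1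
      · rw [if_neg (by omega : ¬ 0 + 1 < k), ← hk1]
        norm_num
      · rw [if_pos (by omega : 0 + 1 < k)]
        push_cast
        field_simp
        ring
    · rw [if_pos h0, Nat.cast_sub (by omega : 1 ≤ a)]
      rcases eq_or_lt_of_le (by omega : a + 1 ≤ k) with hk1 | hk1
      · rw [if_neg (by omega : ¬ a + 1 < k), ← hk1]
        push_cast
        field_simp
        ring
      · rw [if_pos hk1]
        push_cast
        field_simp
        ring
  · -- b < a
    rw [if_neg (by omega : ¬ a = b), if_pos (by omega : 0 < a)]
    obtain ⟨e1, e2, e3, e4, e5, e6⟩ :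
        min a b = b ∧ max a b = a ∧ min (a + 1) b = b ∧ max (a + 1) b = a + 1 ∧
          min (a - 1) b = b ∧ max (a - 1) b = a - 1 := by omega
    unfold nent
    rw [e1, e2, e3, e4, e5, e6, Nat.cast_sub (by omega : 1 ≤ a)]
    rcases eq_or_lt_of_le (by omega : a + 1 ≤ k) with hk1 | hk1
    · rw [if_neg (by omega : ¬ a + 1 < k), ← hk1]
      push_cast
      field_simp
      ring
    · rw [if_pos hk1]
      push_cast
      field_simp
      ring

open Matrix

def pathM (k : ℕ) : Matrix (Fin k) (Fin k) ℚ :=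
  Matrix.of fun i j => if i = j then 2 else if i.val + 1 = j.val ∨ j.val + 1 = i.val then -1 else 0

noncomputable def pathN (k : ℕ) : Matrix (Fin k) (Fin k) ℚ :=
  Matrix.of fun i j => nent k i.val j.val

lemma sum_if_val {k m : ℕ} (g : ℕ → ℚ) :
    ∑ l : Fin k, (if l.val = m then g l.val else 0) = if m < k then g m else 0 := by
  split_ifs with h
  · rw [Finset.sum_eq_single (⟨m, h⟩ : Fin k)]
    · simp
    · intro b _ hb
      exact if_neg (fun hv => hb (Fin.ext hv))
    · simp
  · apply Finset.sum_eq_zero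
    intro l _
    have := l.isLt
    rw [if_neg (by omega)]

lemma sum_if_val' {k m : ℕ} (hm : m < k) (g : ℕ → ℚ) :
    ∑ l : Fin k, (if l.val + 1 = m then g l.val else 0) = if 0 < m then g (m - 1) else 0 := by
  rcases Nat.eq_zero_or_pos m with h0 | h0
  · subst h0
    rw [if_neg (by omega)]
    apply Finset.sum_eq_zero
    intro l _
    rw [if_neg (by omega)]
  · rw [if_pos h0]
    have : ∀ l : Fin k, (if l.val + 1 = m then g l.val else 0)
        = (if l.val = m - 1 then g l.val else 0) := by
      intro l
      congr 1
      simp only [eq_iff_iff]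
      omega
    rw [Finset.sum_congr rfl fun l _ => this l, sum_if_val g, if_pos (by omega)]

lemma pathM_mul_pathN (k : ℕ) : pathM k * pathN k = 1 := by
  ext i j
  rw [Matrix.mul_apply]
  have hsplit : ∀ l : Fin k, pathM k i l * pathN k l j =
      (if l = i then 2 * nent k l.val j.val else 0)
      + (if l.val = i.val + 1 then -(nent k l.val j.val) else 0)
      + (if l.val + 1 = i.val then -(nent k l.val j.val) else 0) := by
    intro l
    simp only [pathM, pathN, Matrix.of_apply, Fin.ext_iff]
    split_ifs
    all_goals try ring
    all_goals exfalso; omega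
  rw [Finset.sum_congr rfl fun l _ => hsplit l, Finset.sum_add_distrib, Finset.sum_add_distrib]
  have s1 : ∑ l : Fin k, (if l = i then 2 * nent k l.val j.val else 0)
      = 2 * nent k i.val j.val := by
    rw [Finset.sum_eq_single i] <;> simp +contextual
  have s2 : ∑ l : Fin k, (if l.val = i.val + 1 then -(nent k l.val j.val) else 0)
      = if i.val + 1 < k then -(nent k (i.val + 1) j.val) else 0 :=
    sum_if_val (fun a => -(nent k a j.val))
  have s3 : ∑ l : Fin k, (if l.val + 1 = i.val then -(nent k l.val j.val) else 0)
      = if 0 < i.val then -(nent k (i.val - 1) j.val) else 0 :=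
    sum_if_val' i.isLt (fun a => -(nent k a j.val))
  rw [s1, s2, s3, key k i.val j.val i.isLt j.isLt]
  simp [Matrix.one_apply, Fin.ext_iff]

lemma pathN_mul_pathM (k : ℕ) : pathN k * pathM k = 1 :=
  (mul_eq_one_comm).mp (pathM_mul_pathN k)

noncomputable def pathInv (k : ℕ) : Invertible (pathM k) :=
  ⟨pathN k, pathN_mul_pathM k, pathM_mul_pathN k⟩

lemma nent00 (k : ℕ) : nent k 0 0 = (k : ℚ) / (k + 1) := by
  unfold nent
  norm_num

lemma nent_last (k : ℕ) : nent k (k - 1) (k - 1) = (k : ℚ) / (k + 1) := by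
  rcases Nat.eq_zero_or_pos k with h | h
  · subst h; simp [nent]
  · unfold nent
    rw [min_self, max_self, Nat.cast_sub (by omega : 1 ≤ k)]
    push_cast
    field_simp
    try ring

lemma chainsum_last (k : ℕ) :
    ∑ i : Fin k, ∑ j : Fin k,
      (if (i : ℕ) + 1 = k then (-1 : ℚ) else 0) * pathN k i j
        * (if (j : ℕ) + 1 = k then (-1 : ℚ) else 0) = (k : ℚ) / (k + 1) := by
  cases k with
  | zero => simp
  | succ m =>
    rw [Finset.sum_eq_single (⟨m, by omega⟩ : Fin (m + 1))]
    · rw [Finset.sum_eq_single (⟨m, by omega⟩ : Fin (m + 1))]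
      · have h2 : pathN (m + 1) ⟨m, by omega⟩ ⟨m, by omega⟩
            = ((m + 1 : ℕ) : ℚ) / ((m + 1 : ℕ) + 1) := by
          show nent (m + 1) m m = _
          simpa using nent_last (m + 1)
        rw [if_pos rfl, h2]
        push_cast
        ring
      · intro b _ hb
        rw [if_neg (fun hc => hb (Fin.ext (Nat.succ_injective hc)))]
        ring
      · intro h; exact absurd (Finset.mem_univ _) h
    · intro b _ hb
      rw [if_neg (fun hc => hb (Fin.ext (Nat.succ_injective hc)))]
      simp
    · intro h; exact absurd (Finset.mem_univ _) h

lemma chainsum_zero (k : ℕ) :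
    ∑ i : Fin k, ∑ j : Fin k,
      (if (i : ℕ) = 0 then (-1 : ℚ) else 0) * pathN k i j
        * (if (j : ℕ) = 0 then (-1 : ℚ) else 0) = (k : ℚ) / (k + 1) := by
  cases k with
  | zero => simp
  | succ m =>
    rw [Finset.sum_eq_single (⟨0, by omega⟩ : Fin (m + 1))]
    · rw [Finset.sum_eq_single (⟨0, by omega⟩ : Fin (m + 1))]
      · have h2 : pathN (m + 1) ⟨0, by omega⟩ ⟨0, by omega⟩
            = ((m + 1 : ℕ) : ℚ) / ((m + 1 : ℕ) + 1) := by
          show nent (m + 1) 0 0 = _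
          simpa using nent00 (m + 1)
        rw [if_pos rfl, h2]
        push_cast
        ring
      · intro b _ hb
        rw [if_neg (fun hc => hb (Fin.ext hc))]
        ring
      · intro h; exact absurd (Finset.mem_univ _) h
    · intro b _ hb
      rw [if_neg (fun hc => hb (Fin.ext hc))]
      simp
    · intro h; exact absurd (Finset.mem_univ _) h

lemma det_pathM (k : ℕ) : (pathM k).det = (k : ℚ) + 1 := by
  induction k with
  | zero => simp [Matrix.det_fin_zero]
  | succ k ih =>
    have hsub : (pathM (k + 1)).submatrix finSumFinEquiv finSumFinEquiv =
        Matrix.fromBlocks (pathM k)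
          (Matrix.of fun (i : Fin k) (_ : Fin 1) => if (i : ℕ) + 1 = k then (-1 : ℚ) else 0)
          (Matrix.of fun (_ : Fin 1) (j : Fin k) => if (j : ℕ) + 1 = k then (-1 : ℚ) else 0)
          (Matrix.of fun (_ : Fin 1) (_ : Fin 1) => (2 : ℚ)) := by
      ext x y
      rcases x with i | i <;> rcases y with j | j
      · have hi := i.isLt; have hj := j.isLt
        simp only [Matrix.submatrix_apply, finSumFinEquiv_apply_left,
          Matrix.fromBlocks_apply₁₁, pathM, Matrix.of_apply, Fin.ext_iff, Fin.coe_castAdd]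
      · have hi := i.isLt
        simp only [Matrix.submatrix_apply, finSumFinEquiv_apply_left,
          finSumFinEquiv_apply_right, Matrix.fromBlocks_apply₁₂, pathM, Matrix.of_apply,
          Fin.ext_iff, Fin.coe_castAdd, Fin.coe_natAdd, Fin.fin_one_eq_zero j]
        norm_num
        split_ifs
        all_goals try rfl
        all_goals exfalso; omega
      · have hj := j.isLt
        simp only [Matrix.submatrix_apply, finSumFinEquiv_apply_left,
          finSumFinEquiv_apply_right, Matrix.fromBlocks_apply₂₁, pathM, Matrix.of_apply,
          Fin.ext_iff, Fin.coe_castAdd, Fin.coe_natAdd, Fin.fin_one_eq_zero i]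
        norm_num
        split_ifs
        all_goals try rfl
        all_goals exfalso; omega
      · simp only [Matrix.submatrix_apply, finSumFinEquiv_apply_right,
          Matrix.fromBlocks_apply₂₂, pathM, Matrix.of_apply, Fin.ext_iff, Fin.coe_natAdd,
          Fin.fin_one_eq_zero i, Fin.fin_one_eq_zero j]
        norm_num
    have hdet : (pathM (k + 1)).det = (Matrix.fromBlocks (pathM k)
          (Matrix.of fun (i : Fin k) (_ : Fin 1) => if (i : ℕ) + 1 = k then (-1 : ℚ) else 0)
          (Matrix.of fun (_ : Fin 1) (j : Fin k) => if (j : ℕ) + 1 = k then (-1 : ℚ) else 0)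
          (Matrix.of fun (_ : Fin 1) (_ : Fin 1) => (2 : ℚ))).det := by
      rw [← hsub, Matrix.det_submatrix_equiv_self]
    letI : Invertible (pathM k) := pathInv k
    rw [hdet, Matrix.det_fromBlocks₁₁]
    have hinv : (⅟(pathM k) : Matrix (Fin k) (Fin k) ℚ) = pathN k := rfl
    rw [ih, hinv]
    have hent : ((Matrix.of fun (_ : Fin 1) (_ : Fin 1) => (2 : ℚ)) -
        (Matrix.of fun (_ : Fin 1) (j : Fin k) => if (j : ℕ) + 1 = k then (-1 : ℚ) else 0)
          * pathN k *
        (Matrix.of fun (i : Fin k) (_ : Fin 1) => if (i : ℕ) + 1 = k then (-1 : ℚ) else 0)).det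
        = 2 - (k : ℚ) / (k + 1) := by
      rw [Matrix.det_fin_one]
      simp only [Matrix.sub_apply, Matrix.of_apply]
      have hmul : ((Matrix.of fun (_ : Fin 1) (j : Fin k) =>
            if (j : ℕ) + 1 = k then (-1 : ℚ) else 0) * pathN k *
          (Matrix.of fun (i : Fin k) (_ : Fin 1) =>
            if (i : ℕ) + 1 = k then (-1 : ℚ) else 0)) 0 0 = (k : ℚ) / (k + 1) := by
        rw [← chainsum_last k]
        simp only [Matrix.mul_apply, Matrix.of_apply, Finset.sum_mul]
        rw [Finset.sum_comm]
      rw [hmul]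
    rw [hent]
    have hk : (k : ℚ) + 1 ≠ 0 := by positivity
    push_cast
    field_simp
    ring

noncomputable def brow (k : ℕ) : Matrix Unit (Fin k) ℚ :=
  Matrix.of fun _ i => if (i : ℕ) = 0 then -1 else 0

noncomputable def bcol (k : ℕ) : Matrix (Fin k) Unit ℚ :=
  Matrix.of fun i _ => if (i : ℕ) = 0 then -1 else 0

lemma brow_mul_bcol (k : ℕ) :
    brow k * pathN k * bcol k = Matrix.of fun _ _ : Unit => (k : ℚ) / (k + 1) := by
  ext u v
  show (brow k * pathN k * bcol k) () () = _
  rw [Matrix.of_apply, ← chainsum_zero k]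
  simp only [Matrix.mul_apply, brow, bcol, Matrix.of_apply, Finset.sum_mul]
  rw [Finset.sum_comm]

lemma gram_blocks (p q r : ℕ) :
    (gramT p q r).map (fun x : ℤ => (x : ℚ)) =
      Matrix.fromBlocks (Matrix.of fun _ _ : Unit => 2)
        (Matrix.fromCols (brow (p-1)) (Matrix.fromCols (brow (q-1)) (brow (r-1))))
        (Matrix.fromRows (bcol (p-1)) (Matrix.fromRows (bcol (q-1)) (bcol (r-1))))
        (Matrix.fromBlocks (pathM (p-1)) 0 0
          (Matrix.fromBlocks (pathM (q-1)) 0 0 (pathM (r-1)))) := by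
  ext v w
  rcases v with _ | (i | i | i) <;> rcases w with _ | (j | j | j) <;>
    simp [Matrix.map_apply, gramT, TAdj, brow, bcol, pathM,
      Matrix.fromCols_apply_inl, Matrix.fromCols_apply_inr, Matrix.fromRows_apply_inl,
      Matrix.fromRows_apply_inr, Fin.ext_iff] <;>
    split_ifs <;> simp_all <;> omega

lemma det_gramQ (p q r : ℕ) (hp : 1 ≤ p) (hq : 1 ≤ q) (hr : 1 ≤ r) :
    (gramT p q r).det = (p * q + q * r + r * p : ℤ) - p * q * r := by
  set a := p - 1 with ha
  set b := q - 1 with hb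
  set c := r - 1 with hc
  -- determinant over ℚ
  set D : Matrix (Fin a ⊕ (Fin b ⊕ Fin c)) (Fin a ⊕ (Fin b ⊕ Fin c)) ℚ :=
    Matrix.fromBlocks (pathM a) 0 0 (Matrix.fromBlocks (pathM b) 0 0 (pathM c)) with hD
  set Dinv : Matrix (Fin a ⊕ (Fin b ⊕ Fin c)) (Fin a ⊕ (Fin b ⊕ Fin c)) ℚ :=
    Matrix.fromBlocks (pathN a) 0 0 (Matrix.fromBlocks (pathN b) 0 0 (pathN c)) with hDinv
  have hDN : D * Dinv = 1 := by
    simp [hD, hDinv, Matrix.fromBlocks_multiply, pathM_mul_pathN, Matrix.fromBlocks_one]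
  have hND : Dinv * D = 1 := by
    simp [hD, hDinv, Matrix.fromBlocks_multiply, pathN_mul_pathM, Matrix.fromBlocks_one]
  letI : Invertible D := ⟨Dinv, hND, hDN⟩
  have hinvD : (⅟D : Matrix _ _ ℚ) = Dinv := rfl
  have hcast : ((gramT p q r).det : ℚ) = ((gramT p q r).map (fun x : ℤ => (x : ℚ))).det := by
    rw [show (fun x : ℤ => (x : ℚ)) = ⇑(Int.castRingHom ℚ) from rfl,
      ← RingHom.mapMatrix_apply, ← RingHom.map_det]
    rfl
  have key : ((gramT p q r).det : ℚ)
      = ((a : ℚ) + 1) * (((b : ℚ) + 1) * ((c : ℚ) + 1)) *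
        (2 - ((a : ℚ) / (a + 1) + ((b : ℚ) / (b + 1) + (c : ℚ) / (c + 1)))) := by
    rw [hcast, gram_blocks p q r, Matrix.det_fromBlocks₂₂, hinvD]
    have hdetD : D.det = ((a : ℚ) + 1) * (((b : ℚ) + 1) * ((c : ℚ) + 1)) := by
      rw [hD, Matrix.det_fromBlocks_zero₂₁, Matrix.det_fromBlocks_zero₂₁,
        det_pathM, det_pathM, det_pathM]
    have hschur :
        (Matrix.fromCols (brow a) (Matrix.fromCols (brow b) (brow c))) * Dinv *
          (Matrix.fromRows (bcol a) (Matrix.fromRows (bcol b) (bcol c)))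
        = Matrix.of fun _ _ : Unit =>
            ((a : ℚ) / (a + 1) + ((b : ℚ) / (b + 1) + (c : ℚ) / (c + 1))) := by
      rw [hDinv, Matrix.fromCols_mul_fromBlocks, Matrix.mul_zero, Matrix.mul_zero,
        add_zero, zero_add, Matrix.fromCols_mul_fromRows,
        Matrix.fromCols_mul_fromBlocks, Matrix.mul_zero, Matrix.mul_zero,
        add_zero, zero_add, Matrix.fromCols_mul_fromRows,
        brow_mul_bcol, brow_mul_bcol, brow_mul_bcol]
      ext u v
      simp [Matrix.add_apply]
    rw [hschur, hdetD, Matrix.det_unique]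
    simp [Matrix.sub_apply]
  have hpa : (a : ℚ) + 1 = (p : ℚ) := by
    rw [ha, Nat.cast_sub hp]; ring
  have hqb : (b : ℚ) + 1 = (q : ℚ) := by
    rw [hb, Nat.cast_sub hq]; ring
  have hrc : (c : ℚ) + 1 = (r : ℚ) := by
    rw [hc, Nat.cast_sub hr]; ring
  have ha' : (a : ℚ) = (p : ℚ) - 1 := by linarith
  have hb' : (b : ℚ) = (q : ℚ) - 1 := by linarith
  have hc' : (c : ℚ) = (r : ℚ) - 1 := by linarith
  have hp0 : (p : ℚ) ≠ 0 := by positivity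
  have hq0 : (q : ℚ) ≠ 0 := by positivity
  have hr0 : (r : ℚ) ≠ 0 := by positivity
  have final : ((gramT p q r).det : ℚ) = (((p * q + q * r + r * p : ℤ) - p * q * r : ℤ) : ℚ) := by
    rw [key, ha', hb', hc']
    simp only [sub_add_cancel]
    push_cast
    field_simp
    ring
  exact_mod_cast final

lemma arith_iff (p q r : ℕ) (hp : 1 ≤ p) (hpq : p ≤ q) (hqr : q ≤ r) :
    (((p * q + q * r + r * p : ℤ) - p * q * r = 1) ∨
      ((p * q + q * r + r * p : ℤ) - p * q * r = -1)) ↔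
      ((p, q, r) = (2, 3, 5) ∨ (p, q, r) = (2, 3, 7)) := by
  have hq1 : (1 : ℤ) ≤ (q : ℤ) := by exact_mod_cast le_trans hp hpq
  have hr1 : (1 : ℤ) ≤ (r : ℤ) := by exact_mod_cast le_trans (le_trans hp hpq) hqr
  have hpqZ : (p : ℤ) ≤ (q : ℤ) := by exact_mod_cast hpq
  have hqrZ : (q : ℤ) ≤ (r : ℤ) := by exact_mod_cast hqr
  constructor
  · intro h
    rcases (by omega : p = 1 ∨ p = 2 ∨ 3 ≤ p) with rfl | rfl | hp3
    · -- p = 1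
      exfalso
      rcases h with h | h <;> (push_cast at h; nlinarith)
    · -- p = 2
      rcases (by omega : q = 2 ∨ q = 3 ∨ q = 4 ∨ 5 ≤ q) with rfl | rfl | rfl | hq5
      · exfalso
        rcases h with h | h <;> (push_cast at h; nlinarith)
      · -- q = 3 : 6 - r = ±1
        rcases h with h | h
        · left
          have : (r : ℤ) = 5 := by push_cast at h; nlinarith
          have : r = 5 := by exact_mod_cast this
          subst this; rfl
        · right
          have : (r : ℤ) = 7 := by push_cast at h; nlinarith
          have : r = 7 := by exact_mod_cast this
          subst this; rfl
      · exfalso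
        rcases h with h | h <;> (push_cast at h; omega)
      · exfalso
        have hq5' : (5 : ℤ) ≤ (q : ℤ) := by exact_mod_cast hq5
        have h0r : (0 : ℤ) ≤ (r : ℤ) := by linarith
        have h5r : (5 : ℤ) * r ≤ (q : ℤ) * r := mul_le_mul_of_nonneg_right hq5' h0r
        rcases h with h | h <;> (push_cast at h; nlinarith)
    · -- 3 ≤ p
      exfalso
      have hp3' : (3 : ℤ) ≤ (p : ℤ) := by exact_mod_cast hp3
      have hq0 : (0 : ℤ) ≤ (q : ℤ) := by linarith
      have hr0 : (0 : ℤ) ≤ (r : ℤ) := by linarith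
      have hprZ : (p : ℤ) ≤ (r : ℤ) := le_trans hpqZ hqrZ
      have e1 : (p : ℤ) * q ≤ (r : ℤ) * q := mul_le_mul_of_nonneg_right hprZ hq0
      have e2 : (r : ℤ) * p ≤ (r : ℤ) * q := mul_le_mul_of_nonneg_left hpqZ hr0
      have e3 : (3 : ℤ) * (q * r) ≤ (p : ℤ) * (q * r) :=
        mul_le_mul_of_nonneg_right hp3' (by positivity)
      rcases h with h | h
      · nlinarith
      · -- pq + qr + rp - pqr = -1
        have key2 : ((p : ℤ) - 1) * ((q : ℤ) - 1) * ((r : ℤ) - 1)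
            = (p : ℤ) + q + r := by linear_combination -h
        have f1 : (0 : ℤ) ≤ ((p : ℤ) - 3) * (((q : ℤ) - 1) * ((r : ℤ) - 1)) :=
          mul_nonneg (by linarith) (mul_nonneg (by linarith) (by linarith))
        have f2 : (0 : ℤ) ≤ ((q : ℤ) - 3) * ((r : ℤ) - 1) :=
          mul_nonneg (by linarith) (by linarith)
        have hr4 : (r : ℤ) ≤ 4 := by nlinarith
        have hr4' : r ≤ 4 := by exact_mod_cast hr4
        have hp3n : 3 ≤ p := hp3
        have hq4 : q ≤ 4 := le_trans hqr hr4'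
        have hp4 : p ≤ 4 := le_trans hpq hq4
        have hq3 : 3 ≤ q := le_trans hp3 hpq
        have hr3 : 3 ≤ r := le_trans hq3 hqr
        interval_cases p <;> interval_cases q <;> interval_cases r <;> norm_num at h
  · intro h
    rcases h with h | h <;>
      (simp only [Prod.mk.injEq] at h; obtain ⟨rfl, rfl, rfl⟩ := h)
    · left; norm_num
    · right; norm_num

/-- for `1 ≤ p ≤ q ≤ r`, the determinant of the Gram matrix `G(p,q,r)` is `±1`
(i.e. the lattice `E_{p,q,r}` is unimodular) if and only if `(p,q,r) = (2,3,5)` or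
`(p,q,r) = (2,3,7)`. -/
theorem stmt9 (p q r : ℕ) (hp : 1 ≤ p) (hpq : p ≤ q) (hqr : q ≤ r) :
    ((gramT p q r).det = 1 ∨ (gramT p q r).det = -1) ↔
      ((p, q, r) = (2, 3, 5) ∨ (p, q, r) = (2, 3, 7)) := by
  rw [det_gramQ p q r hp (hp.trans hpq) ((hp.trans hpq).trans hqr)]
  exact arith_iff p q r hp hpq hqr
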